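/- Hyperbolic Cauchy determinant: for complex numbers x₁,…,x_N and y₁,…,y_N with sinh(x_j − y_k) ≠ 0 for all j,k and the x's pairwise distinct mod iπ and the y's pairwise distinct mod iπ, det_N [1/sinh(x_j − y_k)] = ∏_{j<k} sinh(x_j − x_k)·sinh(y_k − y_j) / ∏_{j,k} sinh(x_j − y_k). -/

import Mathlib

open Matrix Finset

section CauchyDetAux

open Polynomial


lemma swapIoi {N : ℕ} {M : Type*} [CommMonoid M] (f : Fin N → Fin N → M) :
    ∏ j : Fin N, ∏ k ∈ Ioi j, f j k = ∏ k : Fin N, ∏ j ∈ Iio k, f j k :=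
  Finset.prod_comm' (by simp)

lemma eraseSplit {N : ℕ} (k : Fin N) : (univ : Finset (Fin N)).erase k = Iio k ∪ Ioi k := by
  ext l
  simp only [mem_erase, mem_union, mem_univ, and_true, mem_Iio, mem_Ioi]
  exact ⟨fun h => Ne.lt_or_gt h, fun h => h.elim ne_of_lt ne_of_gt⟩

lemma prodErase {N : ℕ} {M : Type*} [CommMonoid M] (k : Fin N) (f : Fin N → M) :
    ∏ l ∈ (univ : Finset (Fin N)).erase k, f l = (∏ l ∈ Iio k, f l) * ∏ l ∈ Ioi k, f l := by
  rw [eraseSplit, Finset.prod_union (by simp [Finset.disjoint_left]; omega)]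

lemma vand_mul_M {N : ℕ} (b : Fin N → ℂ) (v : Fin N → ℂ) (j k : Fin N) :
    (vandermonde v * (of fun m k : Fin N =>
        (∏ l ∈ (univ : Finset (Fin N)).erase k, (X - Polynomial.C (b l))).coeff m)) j k
      = ∏ l ∈ (univ : Finset (Fin N)).erase k, (v j - b l) := by
  set p : ℂ[X] := ∏ l ∈ (univ : Finset (Fin N)).erase k, (X - Polynomial.C (b l)) with hp
  have hdeg : p.natDegree < N := by
    rw [hp, natDegree_prod_of_monic _ _ (fun i _ => monic_X_sub_C _)]
    simp only [natDegree_X_sub_C, Finset.sum_const, smul_eq_mul, mul_one,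
      Finset.card_erase_of_mem (mem_univ k), Finset.card_univ, Fintype.card_fin]
    have := k.pos
    omega
  have heval : p.eval (v j) = ∏ l ∈ (univ : Finset (Fin N)).erase k, (v j - b l) := by
    simp [hp, eval_prod]
  rw [← heval, eval_eq_sum_range' hdeg, mul_apply]
  rw [← Fin.sum_univ_eq_sum_range (fun i => p.coeff i * v j ^ i) N]
  exact Finset.sum_congr rfl fun m _ => by simp [vandermonde_apply, mul_comm, hp]

lemma cauchy_det {N : ℕ} (a b : Fin N → ℂ) (hab : ∀ j k, a j - b k ≠ 0)
    (hb : Function.Injective b) :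
    det (of fun j k : Fin N => 1 / (a j - b k)) =
      (∏ j : Fin N, ∏ k ∈ Ioi j, (a j - a k) * (b k - b j)) /
        ∏ j : Fin N, ∏ k : Fin N, (a j - b k) := by
  classical
  set M : Matrix (Fin N) (Fin N) ℂ :=
    of fun m k => (∏ l ∈ (univ : Finset (Fin N)).erase k, (X - Polynomial.C (b l))).coeff m
    with hM
  set C : Matrix (Fin N) (Fin N) ℂ := of fun j k => 1 / (a j - b k) with hC
  set Va : ℂ := det (vandermonde a) with hVa
  set Vb : ℂ := det (vandermonde b) with hVb
  set R : ℂ := ∏ j : Fin N, ∏ k : Fin N, (a j - b k) with hR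
  set Num : ℂ := ∏ j : Fin N, ∏ k ∈ Ioi j, (a j - a k) * (b k - b j) with hNum
  set D : ℂ := ∏ k : Fin N, ∏ l ∈ (univ : Finset (Fin N)).erase k, (b k - b l) with hD
  -- (1) R * det C = Va * det M
  have h1 : R * det C = Va * det M := by
    have hP : (vandermonde a * M : Matrix (Fin N) (Fin N) ℂ)
        = of fun j k => (∏ l : Fin N, (a j - b l)) * C j k := by
      ext j k
      rw [vand_mul_M]
      rw [of_apply, hC, of_apply]
      rw [← Finset.mul_prod_erase univ (fun l => a j - b l) (mem_univ k)]
      field_simp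
      exact (mul_div_cancel_right₀ _ (hab j k)).symm
    have hdP := congrArg det hP
    rw [det_mul, det_mul_column] at hdP
    rw [hR, hVa, hdP]
  -- (2) Vb * det M = D
  have h2 : Vb * det M = D := by
    have hQ : (vandermonde b * M : Matrix (Fin N) (Fin N) ℂ)
        = diagonal fun k => ∏ l ∈ (univ : Finset (Fin N)).erase k, (b k - b l) := by
      ext m k
      rw [vand_mul_M]
      rcases eq_or_ne m k with rfl | h
      · simp [diagonal]
      · rw [diagonal_apply_ne _ h]
        exact Finset.prod_eq_zero (Finset.mem_erase.2 ⟨h, mem_univ m⟩) (by ring)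
    have hdQ := congrArg det hQ
    rw [det_mul, det_diagonal] at hdQ
    rw [hVb, hD, hdQ]
  -- (3) Num * Vb = Va * D
  have h3 : Num * Vb = Va * D := by
    set S : ℂ := ∏ j : Fin N, ∏ k ∈ Ioi j, (-1 : ℂ) with hS
    have hVa' : Va = ∏ j : Fin N, ∏ k ∈ Ioi j, (a k - a j) := by
      rw [hVa, det_vandermonde]
    have hVb' : Vb = ∏ j : Fin N, ∏ k ∈ Ioi j, (b k - b j) := by
      rw [hVb, det_vandermonde]
    have hNum' : Num = (S * Va) * Vb := by
      rw [hNum, hVa', hVb', hS]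
      rw [← Finset.prod_mul_distrib, ← Finset.prod_mul_distrib]
      refine Finset.prod_congr rfl fun j _ => ?_
      rw [← Finset.prod_mul_distrib, ← Finset.prod_mul_distrib]
      exact Finset.prod_congr rfl fun k _ => by ring
    have hD' : D = Vb * (S * Vb) := by
      rw [hD]
      have : ∀ k : Fin N, ∏ l ∈ (univ : Finset (Fin N)).erase k, (b k - b l)
          = (∏ l ∈ Iio k, (b k - b l)) * ∏ l ∈ Ioi k, (b k - b l) := fun k => prodErase k _
      rw [Finset.prod_congr rfl fun k _ => this k, Finset.prod_mul_distrib]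
      congr 1
      · rw [hVb', ← swapIoi fun l k => (b k - b l)]
      · rw [hS, hVb', ← Finset.prod_mul_distrib]
        refine Finset.prod_congr rfl fun j _ => ?_
        rw [← Finset.prod_mul_distrib]
        exact Finset.prod_congr rfl fun k _ => by ring
    rw [hNum', hD']
    ring
  -- assemble
  have hRne : R ≠ 0 := Finset.prod_ne_zero_iff.2 fun j _ =>
    Finset.prod_ne_zero_iff.2 fun k _ => hab j k
  have hVbne : Vb ≠ 0 := by
    rw [hVb, det_vandermonde]
    exact Finset.prod_ne_zero_iff.2 fun j _ => Finset.prod_ne_zero_iff.2 fun k hk =>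
      sub_ne_zero.2 fun h => (ne_of_gt (mem_Ioi.1 hk)) (hb h)
  rw [eq_div_iff hRne]
  have : det C * R * Vb = Num * Vb := by
    calc det C * R * Vb = Va * det M * Vb := by rw [← h1]; ring
      _ = Va * D := by rw [← h2]; ring
      _ = Num * Vb := h3.symm
  exact mul_right_cancel₀ hVbne (by linear_combination this)

lemma pairProd {N : ℕ} (w : Fin N → ℂ) :
    ∏ j : Fin N, ∏ k ∈ Ioi j, (w j * w k) = ∏ j : Fin N, w j ^ (N - 1) := by
  rw [Finset.prod_congr rfl fun j _ => Finset.prod_mul_distrib, Finset.prod_mul_distrib,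
    swapIoi (fun j k => w k)]
  simp only [Finset.prod_const, Fin.card_Ioi, Fin.card_Iio]
  rw [← Finset.prod_mul_distrib]
  refine Finset.prod_congr rfl fun j _ => ?_
  rw [← pow_add]
  congr 1
  have := j.isLt
  omega

lemma gridProd {N : ℕ} (u v : Fin N → ℂ) :
    ∏ j : Fin N, ∏ k : Fin N, (u j * v k) = ∏ j : Fin N, (u j * v j) ^ N := by
  simp only [Finset.prod_mul_distrib, Finset.prod_const, Finset.card_univ, Fintype.card_fin,
    mul_pow, Finset.prod_pow]


lemma sinh_reduce (z w : ℂ) : Complex.sinh (z - w) =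
    (Complex.exp (2*z) - Complex.exp (2*w)) / (2 * Complex.exp z * Complex.exp w) := by
  have e2 : ∀ u : ℂ, Complex.exp (2*u) = Complex.exp u * Complex.exp u := fun u => by
    rw [two_mul, Complex.exp_add]
  have h1 : Complex.exp (z-w) * Complex.exp w = Complex.exp z := by
    rw [← Complex.exp_add, sub_add_cancel]
  have h2 : Complex.exp (w-z) * Complex.exp z = Complex.exp w := by
    rw [← Complex.exp_add, sub_add_cancel]
  have h3 : Complex.exp (-(z-w)) = Complex.exp (w-z) := by rw [neg_sub]
  rw [e2 z, e2 w, eq_div_iff (mul_ne_zero (mul_ne_zero two_ne_zero (Complex.exp_ne_zero z))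
    (Complex.exp_ne_zero w))]
  linear_combination (Complex.exp z * Complex.exp w) * Complex.two_sinh (z - w) +
    Complex.exp z * h1 - (Complex.exp z * Complex.exp w) * h3 - Complex.exp w * h2

end CauchyDetAux

/-- Hyperbolic Cauchy determinant. -/
theorem hyperbolic_cauchy_det (N : ℕ) (x y : Fin N → ℂ)
    (hxy : ∀ j k, Complex.sinh (x j - y k) ≠ 0)
    (hx : ∀ j k, j ≠ k → Complex.sinh (x j - x k) ≠ 0)
    (hy : ∀ j k, j ≠ k → Complex.sinh (y j - y k) ≠ 0) :
    Matrix.det (Matrix.of fun j k : Fin N => 1 / Complex.sinh (x j - y k)) =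
      (∏ j : Fin N, ∏ k ∈ Finset.Ioi j,
          Complex.sinh (x j - x k) * Complex.sinh (y k - y j)) /
        ∏ j : Fin N, ∏ k : Fin N, Complex.sinh (x j - y k) := by
  rcases Nat.eq_zero_or_pos N with rfl | hN
  · simp [Matrix.det_fin_zero]
  have hab : ∀ j k : Fin N, Complex.exp (2 * x j) - Complex.exp (2 * y k) ≠ 0 := by
    intro j k h
    exact hxy j k (by rw [sinh_reduce, h, zero_div])
  have hbinj : Function.Injective (fun k : Fin N => Complex.exp (2 * y k)) := by
    intro j k h
    by_contra hne
    exact hy j k hne (by rw [sinh_reduce, show Complex.exp (2 * y j) = Complex.exp (2 * y k)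
      from h, sub_self, zero_div])
  have hC := cauchy_det (fun j => Complex.exp (2 * x j)) (fun k => Complex.exp (2 * y k))
     hab hbinj
  have hLHS : Matrix.det (Matrix.of fun j k : Fin N => 1 / Complex.sinh (x j - y k))
      = (∏ j : Fin N, (2 * Complex.exp (x j))) * ((∏ k : Fin N, Complex.exp (y k)) *
        det (of fun j k : Fin N => 1 / (Complex.exp (2 * x j) - Complex.exp (2 * y k)))) := by
    rw [show (Matrix.of fun j k : Fin N => 1 / Complex.sinh (x j - y k))
        = of fun j k : Fin N => (2 * Complex.exp (x j)) *
          ((of fun j k : Fin N => Complex.exp (y k) *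
            ((of fun j k : Fin N => 1 / (Complex.exp (2 * x j) - Complex.exp (2 * y k))) j k))
              j k) from by
      ext j k
      simp only [of_apply]
      rw [sinh_reduce, one_div_div]
      field_simp]
    rw [det_mul_column, det_mul_row]
  have hNum : (∏ j : Fin N, ∏ k ∈ Finset.Ioi j,
        Complex.sinh (x j - x k) * Complex.sinh (y k - y j))
      = (∏ j : Fin N, ∏ k ∈ Ioi j, (Complex.exp (2 * x j) - Complex.exp (2 * x k)) *
          (Complex.exp (2 * y k) - Complex.exp (2 * y j))) /
        (∏ j : Fin N, ∏ k ∈ Ioi j, ((2 * Complex.exp (x j) * Complex.exp (y j)) *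
          (2 * Complex.exp (x k) * Complex.exp (y k)))) := by
    rw [Finset.prod_congr rfl fun j _ => Finset.prod_congr rfl fun k _ =>
      show Complex.sinh (x j - x k) * Complex.sinh (y k - y j)
        = ((Complex.exp (2 * x j) - Complex.exp (2 * x k)) *
            (Complex.exp (2 * y k) - Complex.exp (2 * y j))) /
          ((2 * Complex.exp (x j) * Complex.exp (y j)) *
            (2 * Complex.exp (x k) * Complex.exp (y k))) from by
        rw [sinh_reduce, sinh_reduce, div_mul_div_comm]
        congr 1
        ring]
    simp only [Finset.prod_div_distrib]
  have hDen : (∏ j : Fin N, ∏ k : Fin N, Complex.sinh (x j - y k))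
      = (∏ j : Fin N, ∏ k : Fin N, (Complex.exp (2 * x j) - Complex.exp (2 * y k))) /
        (∏ j : Fin N, ∏ k : Fin N, ((2 * Complex.exp (x j)) * Complex.exp (y k))) := by
    rw [Finset.prod_congr rfl fun j _ => Finset.prod_congr rfl fun k _ =>
      show Complex.sinh (x j - y k)
        = (Complex.exp (2 * x j) - Complex.exp (2 * y k)) /
          ((2 * Complex.exp (x j)) * Complex.exp (y k)) from sinh_reduce (x j) (y k)]
    simp only [Finset.prod_div_distrib]
  rw [hLHS, hC, hNum, hDen, pairProd (fun j => 2 * Complex.exp (x j) * Complex.exp (y j)),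
    gridProd (fun j => 2 * Complex.exp (x j)) (fun k => Complex.exp (y k))]
  have hwne : ∀ j : Fin N, (2 : ℂ) * Complex.exp (x j) * Complex.exp (y j) ≠ 0 := fun j =>
    mul_ne_zero (mul_ne_zero two_ne_zero (Complex.exp_ne_zero _)) (Complex.exp_ne_zero _)
  have hQne : (∏ j : Fin N, (2 * Complex.exp (x j) * Complex.exp (y j)) ^ (N - 1)) ≠ 0 :=
    Finset.prod_ne_zero_iff.2 fun j _ => pow_ne_zero _ (hwne j)
  have hRne : (∏ j : Fin N, ∏ k : Fin N, (Complex.exp (2 * x j) - Complex.exp (2 * y k))) ≠ 0 :=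
    Finset.prod_ne_zero_iff.2 fun j _ => Finset.prod_ne_zero_iff.2 fun k _ => hab j k
  have hTQ : (∏ j : Fin N, (2 * Complex.exp (x j) * Complex.exp (y j)) ^ N)
      = (∏ j : Fin N, (2 * Complex.exp (x j) * Complex.exp (y j))) *
        ∏ j : Fin N, (2 * Complex.exp (x j) * Complex.exp (y j)) ^ (N - 1) := by
    rw [← Finset.prod_mul_distrib]
    refine Finset.prod_congr rfl fun j _ => ?_
    rw [← pow_succ']
    congr 1
    omega
  have hPw : (∏ j : Fin N, (2 * Complex.exp (x j))) * (∏ k : Fin N, Complex.exp (y k))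
      = ∏ j : Fin N, (2 * Complex.exp (x j) * Complex.exp (y j)) := by
    rw [← Finset.prod_mul_distrib]
  have hPwne : (∏ j : Fin N, (2 * Complex.exp (x j) * Complex.exp (y j))) ≠ 0 :=
    Finset.prod_ne_zero_iff.2 fun j _ => hwne j
  have key : ∀ (n q r p : ℂ), q ≠ 0 → r ≠ 0 → p ≠ 0 → p * (n / r) = (n / q) / (r / (p * q)) := by
    intro n q r p hq hr hp
    field_simp
  rw [hTQ, ← mul_assoc, hPw]
  exact key _ _ _ _ hQne hRne hPwne
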